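/- arXiv:1612.02664 — 2 statements merged into one kernel-verified Lean document; each statement's English description precedes it below -/
import Mathlib

section
/- The sum over all primes p_n of (1/p_n) times the product over earlier primes p_k of (1 - 1/p_k) equals 1; that is, ∑_{n=1}^∞ (1/p_n) ∏_{k=1}^{n-1} (1 - 1/p_k) = 1. -/
open Finset

private lemma nth_prime_prime (n : ℕ) : (Nat.nth Nat.Prime n).Prime :=
  Nat.nth_mem_of_infinite Nat.infinite_setOf_prime n

private lemma nth_prime_pos (n : ℕ) : (0 : ℝ) < (Nat.nth Nat.Prime n : ℝ) := by
  exact_mod_cast (nth_prime_prime n).pos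

private lemma one_div_nth_le_one (n : ℕ) : 1 / (Nat.nth Nat.Prime n : ℝ) ≤ 1 := by
  rw [div_le_one (nth_prime_pos n)]
  exact_mod_cast (nth_prime_prime n).one_lt.le

private lemma not_summable_nth : ¬ Summable (fun k : ℕ => 1 / (Nat.nth Nat.Prime k : ℝ)) := by
  intro h
  apply Nat.Primes.not_summable_one_div
  have := h.comp_injective (i := fun p : Nat.Primes => Nat.count Nat.Prime (p : ℕ))
    (fun p q hpq => Subtype.ext (Nat.count_injective p.2 q.2 hpq))
  convert this using 1
  case e'_3 => rfl
  funext p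
  simp [Function.comp, Nat.nth_count p.2]

private lemma prod_tendsto_zero :
    Filter.Tendsto (fun N : ℕ => ∏ k ∈ Finset.range N, (1 - 1 / (Nat.nth Nat.Prime k : ℝ)))
      Filter.atTop (nhds 0) := by
  have hnn : ∀ k, (0 : ℝ) ≤ 1 - 1 / (Nat.nth Nat.Prime k : ℝ) := fun k =>
    sub_nonneg.mpr (one_div_nth_le_one k)
  have hdiv : Filter.Tendsto (fun N : ℕ => ∑ k ∈ Finset.range N, 1 / (Nat.nth Nat.Prime k : ℝ))
      Filter.atTop Filter.atTop :=
    (not_summable_iff_tendsto_nat_atTop_of_nonneg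
      (fun k => by positivity)).mp not_summable_nth
  have hub : ∀ N : ℕ, ∏ k ∈ Finset.range N, (1 - 1 / (Nat.nth Nat.Prime k : ℝ)) ≤
      Real.exp (-(∑ k ∈ Finset.range N, 1 / (Nat.nth Nat.Prime k : ℝ))) := by
    intro N
    rw [← Finset.sum_neg_distrib, Real.exp_sum]
    refine Finset.prod_le_prod (fun k _ => hnn k) (fun k _ => ?_)
    have := Real.add_one_le_exp (-(1 / (Nat.nth Nat.Prime k : ℝ)))
    linarith
  have hexp : Filter.Tendsto
      (fun N : ℕ => Real.exp (-(∑ k ∈ Finset.range N, 1 / (Nat.nth Nat.Prime k : ℝ))))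
      Filter.atTop (nhds 0) :=
    Real.tendsto_exp_atBot.comp (Filter.tendsto_neg_atBot_iff.mpr hdiv)
  refine squeeze_zero (fun N => Finset.prod_nonneg fun k _ => hnn k) hub hexp

theorem sifting_ratios_sum_to_one :
    ∑' n : ℕ, (1 / (Nat.nth Nat.Prime n : ℝ)) *
      ∏ k ∈ Finset.range n, (1 - 1 / (Nat.nth Nat.Prime k : ℝ)) = 1 := by
  set P : ℕ → ℝ := fun N => ∏ k ∈ Finset.range N, (1 - 1 / (Nat.nth Nat.Prime k : ℝ)) with hP
  have key : ∀ N : ℕ, ∑ n ∈ Finset.range N,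
      (1 / (Nat.nth Nat.Prime n : ℝ)) * P n = 1 - P N := by
    intro N
    have : ∀ n, (1 / (Nat.nth Nat.Prime n : ℝ)) * P n = P n - P (n + 1) := by
      intro n
      have : P (n + 1) = P n * (1 - 1 / (Nat.nth Nat.Prime n : ℝ)) := by
        exact Finset.prod_range_succ _ _
      rw [this]; ring
    simp_rw [this]
    rw [Finset.sum_range_sub' P N]
    simp [hP]
  have hnn : ∀ n, 0 ≤ (1 / (Nat.nth Nat.Prime n : ℝ)) * P n := by
    intro n
    refine mul_nonneg (by positivity) (Finset.prod_nonneg fun k _ =>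
      sub_nonneg.mpr (one_div_nth_le_one k))
  have hs : HasSum (fun n : ℕ => (1 / (Nat.nth Nat.Prime n : ℝ)) * P n) 1 := by
    rw [hasSum_iff_tendsto_nat_of_nonneg hnn]
    simp_rw [key]
    have := prod_tendsto_zero
    have h1 : Filter.Tendsto (fun N : ℕ => 1 - P N) Filter.atTop (nhds (1 - 0)) :=
      (tendsto_const_nhds.sub this)
    simpa using h1
  exact hs.tsum_eq
end

section
/- For complex s with Re(s) < 1 and s ≠ 1, lim_{N→∞} N^{s-1} ∑_{n=1}^{N} n^{-s} = 1/(1-s). -/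
open Filter Complex Topology

theorem rpow_ub (a : ℝ) {x n : ℝ} (hn : 0 < n) (h1 : n ≤ x) (h2 : x ≤ 2*n) :
    x ^ a ≤ max 1 (2 ^ a) * n ^ a := by
  rcases le_or_gt 0 a with ha | ha
  · calc x ^ a ≤ (2*n) ^ a := Real.rpow_le_rpow (by linarith) h2 ha
    _ = 2 ^ a * n ^ a := Real.mul_rpow (by norm_num) hn.le
    _ ≤ max 1 (2 ^ a) * n ^ a :=
        mul_le_mul_of_nonneg_right (le_max_right _ _) (Real.rpow_nonneg hn.le a)
  · calc x ^ a ≤ n ^ a := Real.rpow_le_rpow_of_nonpos hn h1 ha.le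
    _ = 1 * n ^ a := (one_mul _).symm
    _ ≤ max 1 (2 ^ a) * n ^ a :=
        mul_le_mul_of_nonneg_right (le_max_left _ _) (Real.rpow_nonneg hn.le a)

theorem rpow_lb (a : ℝ) {x n : ℝ} (hn : 0 < n) (h1 : n ≤ x) (h2 : x ≤ 2*n) :
    min 1 (2 ^ a) * n ^ a ≤ x ^ a := by
  rcases le_or_gt 0 a with ha | ha
  · calc min 1 (2 ^ a) * n ^ a ≤ 1 * n ^ a :=
        mul_le_mul_of_nonneg_right (min_le_left _ _) (Real.rpow_nonneg hn.le a)
    _ = n ^ a := one_mul _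
    _ ≤ x ^ a := Real.rpow_le_rpow hn.le h1 ha
  · calc min 1 (2 ^ a) * n ^ a ≤ 2 ^ a * n ^ a :=
        mul_le_mul_of_nonneg_right (min_le_right _ _) (Real.rpow_nonneg hn.le a)
    _ = (2*n) ^ a := (Real.mul_rpow (by norm_num) hn.le).symm
    _ ≤ x ^ a := Real.rpow_le_rpow_of_nonpos (by linarith) h2 ha.le

theorem deriv_cpow_real (c : ℂ) {t : ℝ} (ht : 0 < t) :
    HasDerivAt (fun y : ℝ => (y : ℂ) ^ c) (c * (t : ℂ) ^ (c - 1)) t := by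
  have h0 : ((t : ℂ)) ∈ Complex.slitPlane := Or.inl (by simpa using ht)
  exact (Complex.hasStrictDerivAt_cpow_const h0).hasDerivAt.comp_ofReal

theorem mv_bound (s : ℂ) {i : ℕ} (hi : 1 ≤ i) {x y : ℝ}
    (hx : x ∈ Set.Icc (i:ℝ) (i+1)) (hy' : y ∈ Set.Icc (i:ℝ) (i+1)) :
    ‖(y : ℂ) ^ (-s) - (x : ℂ) ^ (-s)‖ ≤
      ‖s‖ * (max 1 (2 ^ (-s.re - 1)) * (i:ℝ) ^ (-s.re - 1)) := by
  have hi0 : (0:ℝ) < i := by exact_mod_cast hi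
  have hi1 : (1:ℝ) ≤ i := by exact_mod_cast hi
  set C := ‖s‖ * (max 1 (2 ^ (-s.re - 1)) * (i:ℝ) ^ (-s.re - 1)) with hC
  have key : ∀ z ∈ Set.Icc (i:ℝ) (i+1),
      HasDerivWithinAt (fun t : ℝ => (t:ℂ) ^ (-s)) ((-s) * (z:ℂ) ^ (-s - 1))
        (Set.Icc (i:ℝ) (i+1)) z := fun z hz =>
    (deriv_cpow_real (-s) (lt_of_lt_of_le hi0 hz.1)).hasDerivWithinAt
  have bound : ∀ z ∈ Set.Icc (i:ℝ) (i+1), ‖(-s) * (z:ℂ) ^ (-s - 1)‖ ≤ C := by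
    intro z hz
    have hz0 : (0:ℝ) < z := lt_of_lt_of_le hi0 hz.1
    rw [norm_mul, norm_neg]
    have h1 : ‖(z:ℂ) ^ (-s - 1)‖ = z ^ (-s.re - 1) := by
      rw [Complex.norm_cpow_eq_rpow_re_of_pos hz0]
      norm_num
    rw [h1, hC]
    exact mul_le_mul_of_nonneg_left
      (rpow_ub _ hi0 hz.1 (by linarith [hz.2, hi1])) (norm_nonneg s)
  have := (convex_Icc (i:ℝ) (i+1)).norm_image_sub_le_of_norm_hasDerivWithin_le key bound hx hy'
  calc ‖(y : ℂ) ^ (-s) - (x : ℂ) ^ (-s)‖ ≤ C * ‖y - x‖ := this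
  _ ≤ C * 1 := by
      apply mul_le_mul_of_nonneg_left _ ?_
      · rw [Real.norm_eq_abs, abs_le]
        constructor <;> [linarith [hx.2, hy'.1]; linarith [hx.1, hy'.2]]
      · have := norm_nonneg s
        positivity
  _ = C := mul_one C

theorem partial_sum_asymptotic (s : ℂ) (hs : s.re < 1) (hs1 : s ≠ 1) :
    Tendsto (fun N : ℕ => (N : ℂ) ^ (s - 1) * ∑ n ∈ Finset.Icc 1 N, (n : ℂ) ^ (-s))
      atTop (nhds (1 / (1 - s))) := by
  set σ := s.re with hσdef
  have hres : -1 < (-s).re := by simp [Complex.neg_re, ← hσdef]; linarith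
  have h1s : (1 : ℂ) - s ≠ 0 := fun h => hs1 ((sub_eq_zero.mp h).symm)
  set f : ℕ → ℂ := fun i =>
    (((i : ℝ) + 1 : ℝ) : ℂ) ^ (-s) - ∫ x in (i : ℝ)..((i : ℝ) + 1), (x : ℂ) ^ (-s) with hf
  set g : ℕ → ℝ := fun i => ((i : ℝ) + 1) ^ (1 - σ) - (i : ℝ) ^ (1 - σ) with hg
  set K : ℝ := ‖s‖ * max 1 (2 ^ (-σ - 1)) with hK
  set c : ℝ := min 1 (2 ^ (-σ)) * (1 - σ) with hc
  have hcpos : 0 < c := by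
    apply mul_pos _ (by linarith)
    positivity
  have hKnn : 0 ≤ K := mul_nonneg (norm_nonneg s) (le_trans zero_le_one (le_max_left _ _))
  -- nonnegativity of g
  have hgnn : ∀ i, 0 ≤ g i := fun i => sub_nonneg.2
    (Real.rpow_le_rpow (Nat.cast_nonneg i) (by linarith) (by linarith))
  -- sum of g
  have hgsum : ∀ n : ℕ, ∑ i ∈ Finset.range n, g i = (n : ℝ) ^ (1 - σ) := by
    intro n
    have h1 : ∀ i : ℕ, g i = (fun j : ℕ => ((j : ℝ)) ^ (1 - σ)) (i + 1)
        - (fun j : ℕ => ((j : ℝ)) ^ (1 - σ)) i := by intro i; simp only [hg]; push_cast; ring_nf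
    calc ∑ i ∈ Finset.range n, g i
        = ∑ i ∈ Finset.range n, ((fun j : ℕ => ((j : ℝ)) ^ (1 - σ)) (i + 1)
            - (fun j : ℕ => ((j : ℝ)) ^ (1 - σ)) i) := Finset.sum_congr rfl fun i _ => h1 i
      _ = ((n : ℝ)) ^ (1 - σ) - ((0 : ℕ) : ℝ) ^ (1 - σ) :=
          Finset.sum_range_sub (fun j : ℕ => ((j : ℝ)) ^ (1 - σ)) n
      _ = (n : ℝ) ^ (1 - σ) := by
          rw [Nat.cast_zero, Real.zero_rpow (by linarith), sub_zero]
  have h'g : Tendsto (fun n => ∑ i ∈ Finset.range n, g i) atTop atTop := by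
    simp only [hgsum]
    exact (tendsto_rpow_atTop (by linarith)).comp tendsto_natCast_atTop_atTop
  -- bound on f
  have hfb : ∀ i : ℕ, 1 ≤ i → ‖f i‖ ≤ K * (i : ℝ) ^ (-σ - 1) := by
    intro i hi
    have hi0 : (0 : ℝ) < i := by exact_mod_cast hi
    have hint : IntervalIntegrable (fun x : ℝ => (x : ℂ) ^ (-s)) MeasureTheory.volume
        (i : ℝ) ((i : ℝ) + 1) := intervalIntegral.intervalIntegrable_cpow' hres
    have e1 : (((i : ℝ) + 1 : ℝ) : ℂ) ^ (-s)
        = ∫ _x in (i : ℝ)..((i : ℝ) + 1), (((i : ℝ) + 1 : ℝ) : ℂ) ^ (-s) := by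
      rw [intervalIntegral.integral_const]
      simp
    have e2 : f i = ∫ x in (i : ℝ)..((i : ℝ) + 1),
        ((((i : ℝ) + 1 : ℝ)) : ℂ) ^ (-s) - (x : ℂ) ^ (-s) := by
      rw [hf]; simp only []
      rw [intervalIntegral.integral_sub intervalIntegrable_const hint,
        intervalIntegral.integral_const]
      simp
    rw [e2]
    have hb := intervalIntegral.norm_integral_le_of_norm_le_const
      (C := K * (i : ℝ) ^ (-σ - 1))
      (f := fun x : ℝ => ((((i : ℝ) + 1 : ℝ)) : ℂ) ^ (-s) - (x : ℂ) ^ (-s))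
      (a := (i : ℝ)) (b := (i : ℝ) + 1) ?_
    · calc ‖∫ x in (i : ℝ)..((i : ℝ) + 1),
          ((((i : ℝ) + 1 : ℝ)) : ℂ) ^ (-s) - (x : ℂ) ^ (-s)‖
          ≤ K * (i : ℝ) ^ (-σ - 1) * |((i : ℝ) + 1) - (i : ℝ)| := hb
        _ = K * (i : ℝ) ^ (-σ - 1) := by simp
    · intro x hx
      have hx' : x ∈ Set.Icc (i : ℝ) ((i : ℝ) + 1) := by
        rw [Set.uIoc_of_le (by linarith)] at hx
        exact Set.mem_Icc.2 ⟨hx.1.le, hx.2⟩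
      have := mv_bound s hi hx' (Set.mem_Icc.2 ⟨by linarith, le_refl _⟩)
      calc ‖((((i : ℝ) + 1 : ℝ)) : ℂ) ^ (-s) - (x : ℂ) ^ (-s)‖
          ≤ ‖s‖ * (max 1 (2 ^ (-s.re - 1)) * (i : ℝ) ^ (-s.re - 1)) := this
        _ = K * (i : ℝ) ^ (-σ - 1) := by rw [hK, ← hσdef, mul_assoc]
  -- lower bound on g
  have hgb : ∀ i : ℕ, 1 ≤ i → c * (i : ℝ) ^ (-σ) ≤ g i := by
    intro i hi
    have hi0 : (0 : ℝ) < i := by exact_mod_cast hi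
    have hi1 : (1 : ℝ) ≤ i := by exact_mod_cast hi
    have hint : IntervalIntegrable (fun x : ℝ => x ^ (-σ)) MeasureTheory.volume
        (i : ℝ) ((i : ℝ) + 1) := intervalIntegral.intervalIntegrable_rpow' (by linarith)
    have e : ∫ x in (i : ℝ)..((i : ℝ) + 1), x ^ (-σ)
        = (((i : ℝ) + 1) ^ (-σ + 1) - (i : ℝ) ^ (-σ + 1)) / (-σ + 1) :=
      integral_rpow (Or.inl (by linarith))
    have hmono : (min 1 (2 ^ (-σ)) * (i : ℝ) ^ (-σ)) * (((i : ℝ) + 1) - (i : ℝ))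
        ≤ ∫ x in (i : ℝ)..((i : ℝ) + 1), x ^ (-σ) := by
      have := intervalIntegral.integral_mono_on (a := (i : ℝ)) (b := (i : ℝ) + 1)
        (f := fun _ => min 1 (2 ^ (-σ)) * (i : ℝ) ^ (-σ))
        (g := fun x => x ^ (-σ)) (μ := MeasureTheory.volume)
        (by linarith) intervalIntegrable_const hint
        (fun x hx => rpow_lb (-σ) hi0 hx.1 (by linarith [hx.2]))
      calc (min 1 (2 ^ (-σ)) * (i : ℝ) ^ (-σ)) * (((i : ℝ) + 1) - (i : ℝ))
          = ∫ _x in (i : ℝ)..((i : ℝ) + 1), min 1 (2 ^ (-σ)) * (i : ℝ) ^ (-σ) := by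
            rw [intervalIntegral.integral_const]; simp [mul_comm]
        _ ≤ _ := this
    have hgi : g i = (1 - σ) * ∫ x in (i : ℝ)..((i : ℝ) + 1), x ^ (-σ) := by
      rw [e, hg]
      have h' : (-σ + 1) = (1 - σ) := by ring
      rw [h', mul_comm, div_mul_cancel₀ _ (by linarith : (1:ℝ) - σ ≠ 0)]
    rw [hgi, hc]
    calc min 1 (2 ^ (-σ)) * (1 - σ) * (i : ℝ) ^ (-σ)
        = (1 - σ) * (min 1 (2 ^ (-σ)) * (i : ℝ) ^ (-σ)) := by ring
      _ ≤ (1 - σ) * ∫ x in (i : ℝ)..((i : ℝ) + 1), x ^ (-σ) := by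
          apply mul_le_mul_of_nonneg_left _ (by linarith)
          calc min 1 (2 ^ (-σ)) * (i : ℝ) ^ (-σ)
              = (min 1 (2 ^ (-σ)) * (i : ℝ) ^ (-σ)) * (((i : ℝ) + 1) - (i : ℝ)) := by ring
            _ ≤ _ := hmono
  -- f = o(g)
  have hfo : f =o[atTop] g := by
    rw [Asymptotics.isLittleO_iff]
    intro ε hε
    have hεc : (0 : ℝ) < ε * c := mul_pos hε hcpos
    have htend : Tendsto (fun i : ℕ => K * (i : ℝ)⁻¹) atTop (𝓝 0) := by
      have : Tendsto (fun i : ℕ => ((i : ℝ))⁻¹) atTop (𝓝 0) :=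
        tendsto_inv_atTop_zero.comp tendsto_natCast_atTop_atTop
      simpa using this.const_mul K
    filter_upwards [htend.eventually (eventually_le_nhds hεc), eventually_ge_atTop 1]
      with i hsmall hi
    have hi0 : (0 : ℝ) < i := by exact_mod_cast hi
    have hsplit : (i : ℝ) ^ (-σ - 1) = (i : ℝ)⁻¹ * (i : ℝ) ^ (-σ) := by
      rw [show (-σ - 1) = (-σ) + (-1) by ring, Real.rpow_add hi0, Real.rpow_neg_one]
      ring
    calc ‖f i‖ ≤ K * (i : ℝ) ^ (-σ - 1) := hfb i hi
      _ = (K * (i : ℝ)⁻¹) * (i : ℝ) ^ (-σ) := by rw [hsplit]; ring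
      _ ≤ (ε * c) * (i : ℝ) ^ (-σ) := by
          apply mul_le_mul_of_nonneg_right hsmall (Real.rpow_nonneg hi0.le _)
      _ = ε * (c * (i : ℝ) ^ (-σ)) := by ring
      _ ≤ ε * g i := mul_le_mul_of_nonneg_left (hgb i hi) hε.le
      _ ≤ ε * ‖g i‖ := mul_le_mul_of_nonneg_left (le_abs_self _) hε.le
  -- summation
  have hsum := hfo.sum_range hgnn h'g
  have hsum' : (fun n => ∑ i ∈ Finset.range n, f i) =o[atTop]
      fun n : ℕ => (n : ℝ) ^ (1 - σ) :=
    hsum.congr (fun _ => rfl) hgsum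
  -- identify the partial sums
  have hA : ∀ N : ℕ, ∑ i ∈ Finset.range N, f i
      = (∑ n ∈ Finset.Icc 1 N, (n : ℂ) ^ (-s)) - (N : ℂ) ^ (1 - s) / (1 - s) := by
    intro N
    have hs1' : ∑ i ∈ Finset.range N, (((i : ℝ) + 1 : ℝ) : ℂ) ^ (-s)
        = ∑ n ∈ Finset.Icc 1 N, (n : ℂ) ^ (-s) := by
      rw [← Finset.Ico_add_one_right_eq_Icc, Finset.sum_Ico_eq_sum_range]
      apply Finset.sum_congr (by norm_num)
      intro i _
      push_cast
      ring_nf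
    have hs2 : ∑ i ∈ Finset.range N, ∫ x in (i : ℝ)..((i : ℝ) + 1), (x : ℂ) ^ (-s)
        = ∫ x in (0 : ℝ)..(N : ℝ), (x : ℂ) ^ (-s) := by
      have := intervalIntegral.sum_integral_adjacent_intervals (a := fun k : ℕ => (k : ℝ))
        (μ := MeasureTheory.volume) (f := fun x : ℝ => (x : ℂ) ^ (-s)) (n := N)
        (fun k _ => intervalIntegral.intervalIntegrable_cpow' hres)
      simpa using this
    have hint0 : ∫ x in (0 : ℝ)..(N : ℝ), (x : ℂ) ^ (-s) = (N : ℂ) ^ (1 - s) / (1 - s) := by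
      rw [integral_cpow (Or.inl hres)]
      rw [Complex.ofReal_zero, Complex.zero_cpow (by
        intro h
        apply h1s
        rw [← h]; ring), Complex.ofReal_natCast]
      rw [show (-s + 1) = (1 - s) by ring]
      ring
    rw [hf, Finset.sum_sub_distrib, hs1', hs2, hint0]
  -- big-O for N^(s-1)
  have h2 : (fun N : ℕ => (N : ℂ) ^ (s - 1)) =O[atTop] fun N : ℕ => (N : ℝ) ^ (σ - 1) := by
    rw [Asymptotics.isBigO_iff]
    refine ⟨1, ?_⟩
    filter_upwards [eventually_ge_atTop 1] with N hN
    have hN0 : (0 : ℝ) < N := by exact_mod_cast hN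
    rw [Complex.norm_natCast_cpow_of_pos hN, one_mul, Real.norm_eq_abs,
      _root_.abs_of_nonneg (Real.rpow_nonneg hN0.le _)]
    simp [Complex.sub_re, ← hσdef]
  have h3 := h2.mul_isLittleO hsum'
  have h4 : (fun N : ℕ => (N : ℂ) ^ (s - 1) * ∑ i ∈ Finset.range N, f i) =o[atTop]
      fun _ : ℕ => (1 : ℝ) := by
    apply h3.trans_isBigO
    rw [Asymptotics.isBigO_iff]
    refine ⟨1, ?_⟩
    filter_upwards [eventually_ge_atTop 1] with N hN
    have hN0 : (0 : ℝ) < N := by exact_mod_cast hN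
    rw [← Real.rpow_add hN0, show (σ - 1) + (1 - σ) = 0 by ring, Real.rpow_zero]
    simp
  have hT : Tendsto (fun N : ℕ => (N : ℂ) ^ (s - 1) * ∑ i ∈ Finset.range N, f i) atTop (𝓝 0) :=
    Asymptotics.isLittleO_one_iff ℝ |>.1 h4
  have hfinal := hT.add (tendsto_const_nhds (x := 1 / (1 - s)) (f := atTop))
  rw [zero_add] at hfinal
  apply hfinal.congr'
  filter_upwards [eventually_ge_atTop 1] with N hN
  have hN0 : (N : ℂ) ≠ 0 := by
    simp only [ne_eq, Nat.cast_eq_zero]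
    omega
  have hmul : (N : ℂ) ^ (s - 1) * (N : ℂ) ^ (1 - s) = 1 := by
    rw [← Complex.cpow_add _ _ hN0, show (s - 1) + (1 - s) = 0 by ring, Complex.cpow_zero]
  rw [hA N, mul_sub]
  rw [show (N : ℂ) ^ (s - 1) * ((N : ℂ) ^ (1 - s) / (1 - s))
    = ((N : ℂ) ^ (s - 1) * (N : ℂ) ^ (1 - s)) / (1 - s) by ring, hmul]
  ring
end
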